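/- Every maximal tubing T of St_n other than {{1},...,{n}} admits a unique normal form Tub_r(u₁,...,u_n): there is a unique 0 ≤ r ≤ n, unique 1 ≤ u₁ < ⋯ < u_r ≤ n, and a unique ordering (u_{r+1},...,u_n) of [n]∖{u₁,...,u_r} such that T = { {u₁},...,{u_r}, t₀, t₀∪{u_{r+1}}, ..., t₀∪{u_{r+1},...,u_{n−1}} } where t₀ = {0,u₁,...,u_r}. -/

import Mathlib

open Finset

/-- The star graph `St_n`: center `0` adjacent to each of the outer nodes `1,…,n`,
and no other edges. -/
def St (n : ℕ) : SimpleGraph (Fin (n + 1)) :=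
  SimpleGraph.fromRel fun i _ => i = 0

/-- A tube: a nonempty proper subset of vertices inducing a connected subgraph. -/
def IsTubeF {V : Type*} [Fintype V] (G : SimpleGraph V) (s : Finset V) : Prop :=
  s.Nonempty ∧ s ≠ Finset.univ ∧ (G.induce (↑s : Set V)).Connected

/-- A tubing: a set of pairwise compatible tubes (pairwise nested or far apart). -/
def IsTubingF {V : Type*} [Fintype V] [DecidableEq V] (G : SimpleGraph V) (T : Finset (Finset V)) : Prop :=
  (∀ s ∈ T, IsTubeF G s) ∧
    ∀ s ∈ T, ∀ u ∈ T, s ⊆ u ∨ u ⊆ s ∨ ¬(G.induce (↑(s ∪ u) : Set V)).Connected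

/-- The tubing `Tub_r(u₁,…,u_n)` of `St_n`: the singleton tubes `{u₁},…,{u_r}`
together with the chain `t₀ ⊂ t₀∪{u_{r+1}} ⊂ ⋯ ⊂ t₀∪{u_{r+1},…,u_{n−1}}`, where
`t₀ = {0,u₁,…,u_r}` and `u` is the list `(u₁,…,u_n)`. -/
def tubOf (n r : ℕ) (u : List (Fin (n + 1))) : Finset (Finset (Fin (n + 1))) :=
  ((u.take r).map fun x => ({x} : Finset (Fin (n + 1)))).toFinset ∪
    (Finset.range (n - r)).image fun j =>
      insert (0 : Fin (n + 1)) ((u.take r).toFinset ∪ ((u.drop r).take j).toFinset)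

namespace StarAux
variable {n : ℕ}

lemma st_adj {a b : Fin (n+1)} : (St n).Adj a b ↔ a ≠ b ∧ (a = 0 ∨ b = 0) := by
  simp [St, SimpleGraph.fromRel_adj]

lemma connected_of_zero_mem {s : Finset (Fin (n+1))} (h0 : 0 ∈ s) :
    ((St n).induce (↑s : Set (Fin (n+1)))).Connected := by
  rw [SimpleGraph.connected_iff_exists_forall_reachable]
  refine ⟨⟨0, by exact_mod_cast h0⟩, fun w => ?_⟩
  by_cases hw : (w : Fin (n+1)) = 0
  · have : w = ⟨0, by exact_mod_cast h0⟩ := Subtype.ext hw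
    rw [this]
  · apply SimpleGraph.Adj.reachable
    simp only [SimpleGraph.comap_adj, Function.Embedding.coe_subtype, st_adj]
    exact ⟨Ne.symm hw, Or.inl trivial⟩

lemma connected_singleton (x : Fin (n+1)) :
    ((St n).induce (↑({x} : Finset (Fin (n+1))) : Set (Fin (n+1)))).Connected := by
  rw [SimpleGraph.connected_iff_exists_forall_reachable]
  refine ⟨⟨x, by simp⟩, fun w => ?_⟩
  have : w = ⟨x, by simp⟩ := Subtype.ext (by simpa using w.2)
  rw [this]

lemma not_connected_of_zero_not_mem {s : Finset (Fin (n+1))} (h0 : 0 ∉ s)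
    {a b : Fin (n+1)} (ha : a ∈ s) (hb : b ∈ s) (hab : a ≠ b) :
    ¬ ((St n).induce (↑s : Set (Fin (n+1)))).Connected := by
  intro hc
  have hbot : ((St n).induce (↑s : Set (Fin (n+1)))) = ⊥ := by
    ext u v
    simp only [SimpleGraph.comap_adj, Function.Embedding.coe_subtype, SimpleGraph.bot_adj,
      iff_false, st_adj]
    rintro ⟨-, h | h⟩
    · exact h0 (by simp [← h])
    · exact h0 (by simp [← h])
  have := hc.preconnected ⟨a, by exact_mod_cast ha⟩ ⟨b, by exact_mod_cast hb⟩
  rw [hbot, SimpleGraph.reachable_bot] at this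
  exact hab (by simpa [Subtype.ext_iff] using this)

lemma isTube_iff {s : Finset (Fin (n+1))} :
    IsTubeF (St n) s ↔ s ≠ Finset.univ ∧ (0 ∈ s ∨ ∃ x, x ≠ 0 ∧ s = {x}) := by
  constructor
  · rintro ⟨hne, hproper, hconn⟩
    refine ⟨hproper, ?_⟩
    by_cases h0 : 0 ∈ s
    · exact Or.inl h0
    · obtain ⟨a, ha⟩ := hne
      refine Or.inr ⟨a, fun h => h0 (h ▸ ha), ?_⟩
      ext b
      simp only [mem_singleton]
      constructor
      · intro hb
        by_contra hba
        exact not_connected_of_zero_not_mem h0 hb ha hba hconn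
      · rintro rfl; exact ha
  · rintro ⟨hproper, h0 | ⟨x, hx, rfl⟩⟩
    · exact ⟨⟨0, h0⟩, hproper, connected_of_zero_mem h0⟩
    · exact ⟨⟨x, by simp⟩, hproper, connected_singleton x⟩

variable {T : Finset (Finset (Fin (n+1)))}

lemma mem_of_compat (hT : IsTubingF (St n) T)
    (hmax : ∀ U, IsTubingF (St n) U → T ⊆ U → U = T) {s : Finset (Fin (n+1))}
    (hs : IsTubeF (St n) s)
    (hc : ∀ u ∈ T, s ⊆ u ∨ u ⊆ s ∨ ¬((St n).induce (↑(s ∪ u) : Set (Fin (n+1)))).Connected) :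
    s ∈ T := by
  classical
  have hU : IsTubingF (St n) (insert s T) := by
    constructor
    · intro t ht
      rcases mem_insert.mp ht with rfl | ht
      · exact hs
      · exact hT.1 t ht
    · intro a ha b hb
      rcases mem_insert.mp ha with ha' | ha'
      · rcases mem_insert.mp hb with hb' | hb'
        · rw [ha', hb']; exact Or.inl subset_rfl
        · rw [ha']; exact hc b hb'
      · rcases mem_insert.mp hb with hb' | hb'
        · rw [hb']
          rcases hc a ha' with h | h | h
          · exact Or.inr (Or.inl h)
          · exact Or.inl h
          · exact Or.inr (Or.inr (by rwa [union_comm]))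
        · exact hT.2 a ha' b hb'
  have := hmax _ hU (subset_insert _ _)
  rw [← this]; exact mem_insert_self _ _

lemma chain2 (hT : IsTubingF (St n) T) {c d : Finset (Fin (n+1))}
    (hc : c ∈ T) (hd : d ∈ T) (h0c : 0 ∈ c) : c ⊆ d ∨ d ⊆ c := by
  rcases hT.2 c hc d hd with h | h | h
  · exact Or.inl h
  · exact Or.inr h
  · exact absurd (connected_of_zero_mem (mem_union_left _ h0c)) h

lemma mem_chain_of_singleton (hT : IsTubingF (St n) T) {x : Fin (n+1)} {c : Finset (Fin (n+1))}
    (hx : ({x} : Finset (Fin (n+1))) ∈ T) (hx0 : x ≠ 0) (hc : c ∈ T) (h0 : 0 ∈ c) : x ∈ c := by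
  rcases hT.2 _ hx _ hc with h | h | h
  · exact h (mem_singleton_self x)
  · exact absurd (mem_singleton.mp (h h0)).symm hx0
  · exact absurd (connected_of_zero_mem (mem_union_right _ h0)) h

lemma exists_zero_mem (hT : IsTubingF (St n) T)
    (hmax : ∀ U, IsTubingF (St n) U → T ⊆ U → U = T)
    (hne : T ≠ (Finset.univ.filter fun x => x ≠ (0 : Fin (n + 1))).image
      fun x => ({x} : Finset (Fin (n + 1)))) :
    ∃ c ∈ T, 0 ∈ c := by
  classical
  by_contra h
  push_neg at h
  apply hne
  ext s
  constructor
  · intro hs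
    rcases (isTube_iff.mp (hT.1 s hs)).2 with h0 | ⟨x, hx0, rfl⟩
    · exact absurd h0 (h s hs)
    · exact mem_image.mpr ⟨x, mem_filter.mpr ⟨mem_univ x, hx0⟩, rfl⟩
  · intro hs
    obtain ⟨x, hx, rfl⟩ := mem_image.mp hs
    have hx0 : x ≠ 0 := (mem_filter.mp hx).2
    apply mem_of_compat hT hmax
    · refine isTube_iff.mpr ⟨?_, Or.inr ⟨x, hx0, rfl⟩⟩
      intro he
      have : (0 : Fin (n+1)) ∈ ({x} : Finset (Fin (n+1))) := he ▸ mem_univ 0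
      exact hx0 (mem_singleton.mp this).symm
    · intro u hu
      rcases (isTube_iff.mp (hT.1 u hu)).2 with h0 | ⟨y, hy0, rfl⟩
      · exact absurd h0 (h u hu)
      · by_cases hxy : x = y
        · exact Or.inl (by rw [hxy])
        · refine Or.inr (Or.inr (not_connected_of_zero_not_mem ?_
            (mem_union_left _ (mem_singleton_self x))
            (mem_union_right _ (mem_singleton_self y)) hxy))
          simp only [mem_union, mem_singleton]
          rintro (h | h)
          · exact hx0 h.symm
          · exact hy0 h.symm

lemma union_single {α : Type*} [DecidableEq α] (s : Finset α) (a : α) :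
    s ∪ {a} = insert a s := by
  rw [← LawfulSingleton.insert_empty_eq, union_insert, union_empty]

lemma sorted_lt_eq {l₁ l₂ : List (Fin (n+1))} (h₁ : l₁.Pairwise (· < ·)) (h₂ : l₂.Pairwise (· < ·))
    (hn₁ : l₁.Nodup) (hn₂ : l₂.Nodup) (h : l₁.toFinset = l₂.toFinset) : l₁ = l₂ := by
  haveI : IsAntisymm (Fin (n+1)) (· < ·) := ⟨fun a b h1 h2 => absurd h2 (asymm h1)⟩
  exact List.Perm.eq_of_pairwise (fun a b _ _ h1 h2 => absurd h2 (asymm h1)) h₁ h₂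
    (List.perm_of_nodup_nodup_toFinset_eq hn₁ hn₂ h)

lemma mem_tubOf {r : ℕ} {u : List (Fin (n+1))} {s : Finset (Fin (n+1))} :
    s ∈ tubOf n r u ↔ (∃ x ∈ u.take r, s = ({x} : Finset (Fin (n+1)))) ∨
      ∃ j < n - r, s = insert (0 : Fin (n+1)) ((u.take r).toFinset ∪ ((u.drop r).take j).toFinset) := by
  simp only [tubOf, mem_union, List.mem_toFinset, List.mem_map, mem_image, mem_range]
  constructor
  · rintro (⟨x, hx, rfl⟩ | ⟨j, hj, rfl⟩)
    · exact Or.inl ⟨x, hx, rfl⟩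
    · exact Or.inr ⟨j, hj, rfl⟩
  · rintro (⟨x, hx, rfl⟩ | ⟨j, hj, rfl⟩)
    · exact Or.inl ⟨x, hx, rfl⟩
    · exact Or.inr ⟨j, hj, rfl⟩

end StarAux

/-- Every maximal tubing of `St_n` other than `{{1},…,{n}}` has a unique normal form
`Tub_r(u₁,…,u_n)`: a unique `0 ≤ r ≤ n`, unique `u₁ < ⋯ < u_r` and a unique ordering
`(u_{r+1},…,u_n)` of the remaining outer nodes. -/
theorem maxTubing_star_normal_form (n : ℕ) (T : Finset (Finset (Fin (n + 1))))
    (hT : IsTubingF (St n) T)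
    (hmax : ∀ U, IsTubingF (St n) U → T ⊆ U → U = T)
    (hne : T ≠ (Finset.univ.filter fun x => x ≠ (0 : Fin (n + 1))).image
      fun x => ({x} : Finset (Fin (n + 1)))) :
    ∃! p : ℕ × List (Fin (n + 1)),
      p.1 ≤ n ∧ p.2.length = n ∧ p.2.Nodup ∧ (∀ x ∈ p.2, x ≠ 0) ∧
        List.Pairwise (· < ·) (p.2.take p.1) ∧ T = tubOf n p.1 p.2 := by
  classical
  set S : Finset (Fin (n+1)) := univ.filter (fun x => ({x} : Finset (Fin (n+1))) ∈ T ∧ x ≠ 0)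
    with hSdef
  have hSmem : ∀ x : Fin (n+1), x ∈ S ↔ ({x} : Finset (Fin (n+1))) ∈ T ∧ x ≠ 0 := by
    intro x; simp [hSdef]
  have h0S : (0 : Fin (n+1)) ∉ S := fun h => ((hSmem 0).mp h).2 rfl
  set r := S.card with hrdef
  set t0 : Finset (Fin (n+1)) := insert 0 S with ht0def
  have ht0card : t0.card = r + 1 := by rw [ht0def, card_insert_of_notMem h0S]
  obtain ⟨c₀, hc₀T, hc₀0⟩ := StarAux.exists_zero_mem hT hmax hne
  have ht0sub : ∀ c ∈ T, 0 ∈ c → t0 ⊆ c := by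
    intro c hc h0 y hy
    rcases mem_insert.mp hy with rfl | hy
    · exact h0
    · exact StarAux.mem_chain_of_singleton hT ((hSmem y).mp hy).1 ((hSmem y).mp hy).2 hc h0
  have ht0ne : t0 ≠ univ := by
    intro he
    apply (hT.1 c₀ hc₀T).2.1
    exact univ_subset_iff.mp (he ▸ ht0sub c₀ hc₀T hc₀0)
  have ht0T : t0 ∈ T := by
    apply StarAux.mem_of_compat hT hmax
    · exact StarAux.isTube_iff.mpr ⟨ht0ne, Or.inl (mem_insert_self _ _)⟩
    · intro u hu
      rcases (StarAux.isTube_iff.mp (hT.1 u hu)).2 with h0u | ⟨x, hx0, rfl⟩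
      · exact Or.inl (ht0sub u hu h0u)
      · refine Or.inr (Or.inl ?_)
        intro y hy
        rw [mem_singleton] at hy
        subst hy
        exact mem_insert_of_mem ((hSmem y).mpr ⟨hu, hx0⟩)
  have hrn : r + 1 ≤ n := by
    have h1 : t0.card < (univ : Finset (Fin (n+1))).card :=
      card_lt_card ((subset_univ t0).ssubset_of_ne ht0ne)
    rw [ht0card, card_univ, Fintype.card_fin] at h1
    omega
  have huniq : ∀ c ∈ T, ∀ d ∈ T, 0 ∈ c → 0 ∈ d → c.card = d.card → c = d := by
    intro c hc d hd h0c h0d hcd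
    rcases StarAux.chain2 hT hc hd h0c with h | h
    · exact eq_of_subset_of_card_le h hcd.ge
    · exact (eq_of_subset_of_card_le h hcd.le).symm
  have hex : ∀ k, r + 1 ≤ k → k ≤ n → ∃ c, c ∈ T ∧ 0 ∈ c ∧ c.card = k := by
    intro k
    induction k with
    | zero => intro h _; omega
    | succ m ih =>
      intro hk1 hk2
      by_cases hm : m < r + 1
      · have hmr : m = r := by omega
        exact ⟨t0, ht0T, mem_insert_self _ _, by rw [ht0card, hmr]⟩
      · push_neg at hm
        obtain ⟨c, hcT, hc0, hccard⟩ := ih hm (by omega)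
        set D := T.filter (fun d => 0 ∈ d ∧ c ⊂ d) with hDdef
        rcases D.eq_empty_or_nonempty with hD | hD
        · have hcne : c ≠ univ := (hT.1 c hcT).2.1
          obtain ⟨y, hy⟩ : ∃ y, y ∉ c := by
            by_contra hco; push_neg at hco; exact hcne (eq_univ_iff_forall.mpr hco)
          refine ⟨insert y c, ?_, mem_insert_of_mem hc0,
            by rw [card_insert_of_notMem hy, hccard]⟩
          apply StarAux.mem_of_compat hT hmax
          · refine StarAux.isTube_iff.mpr ⟨?_, Or.inl (mem_insert_of_mem hc0)⟩
            intro he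
            have h9 : (insert y c).card = n + 1 := by rw [he, card_univ, Fintype.card_fin]
            rw [card_insert_of_notMem hy, hccard] at h9
            omega
          · intro u hu
            rcases (StarAux.isTube_iff.mp (hT.1 u hu)).2 with h0u | ⟨x, hx0, rfl⟩
            · refine Or.inr (Or.inl ?_)
              have huc : u ⊆ c := by
                rcases StarAux.chain2 hT hcT hu hc0 with h | h
                · rcases eq_or_ne c u with h2 | hne2
                  · exact h2.ge
                  · exfalso
                    have : u ∈ D := mem_filter.mpr
                      ⟨hu, h0u, Finset.ssubset_iff_subset_ne.mpr ⟨h, hne2⟩⟩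
                    rw [hD] at this
                    exact absurd this (notMem_empty u)
                · exact h
              exact huc.trans (subset_insert _ _)
            · refine Or.inr (Or.inl ?_)
              intro z hz
              rw [mem_singleton] at hz; subst hz
              exact subset_insert _ _
                (ht0sub c hcT hc0 (mem_insert_of_mem ((hSmem z).mpr ⟨hu, hx0⟩)))
        · obtain ⟨d, hdD, hdmin⟩ := D.exists_min_image card hD
          rw [hDdef, mem_filter] at hdD
          obtain ⟨hdT, hd0, hcd⟩ := hdD
          obtain ⟨y, hyd, hyc⟩ := exists_of_ssubset hcd
          have hsub : insert y c ⊆ d := insert_subset hyd hcd.subset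
          refine ⟨insert y c, ?_, mem_insert_of_mem hc0,
            by rw [card_insert_of_notMem hyc, hccard]⟩
          apply StarAux.mem_of_compat hT hmax
          · refine StarAux.isTube_iff.mpr ⟨?_, Or.inl (mem_insert_of_mem hc0)⟩
            intro he
            exact (hT.1 d hdT).2.1 (univ_subset_iff.mp (he ▸ hsub))
          · intro u hu
            rcases (StarAux.isTube_iff.mp (hT.1 u hu)).2 with h0u | ⟨x, hx0, rfl⟩
            · rcases StarAux.chain2 hT hcT hu hc0 with h | h
              · rcases eq_or_ne c u with h2 | hne2
                · exact Or.inr (Or.inl (h2.ge.trans (subset_insert _ _)))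
                · have huD : u ∈ D := mem_filter.mpr
                    ⟨hu, h0u, Finset.ssubset_iff_subset_ne.mpr ⟨h, hne2⟩⟩
                  have hcard_du : d.card ≤ u.card := hdmin u huD
                  rcases StarAux.chain2 hT hdT hu hd0 with h2 | h2
                  · exact Or.inl (hsub.trans h2)
                  · have hud : u = d := eq_of_subset_of_card_le h2 hcard_du
                    refine Or.inl ?_
                    rw [hud]
                    exact hsub
              · exact Or.inr (Or.inl (h.trans (subset_insert _ _)))
            · refine Or.inr (Or.inl ?_)
              intro z hz
              rw [mem_singleton] at hz; subst hz
              exact subset_insert _ _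
                (ht0sub c hcT hc0 (mem_insert_of_mem ((hSmem z).mpr ⟨hu, hx0⟩)))
  choose! f hfT hf0 hfcard using hex
  set g : ℕ → Finset (Fin (n+1)) := fun k => if k ≤ n then f k else univ with hgdef
  have hgf : ∀ k, k ≤ n → g k = f k := fun k hk => by simp [hgdef, hk]
  have hgtop : ∀ k, n < k → g k = univ := fun k hk => by
    simp [hgdef, Nat.not_le.mpr hk]
  have hgcard : ∀ k, r+1 ≤ k → k ≤ n+1 → (g k).card = k := by
    intro k h1 h2
    rcases Nat.lt_or_ge n k with h | h
    · have hk : k = n+1 := by omega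
      rw [hgtop k h, card_univ, Fintype.card_fin, hk]
    · rw [hgf k h]; exact hfcard k h1 h
  have hg0 : ∀ k, r+1 ≤ k → k ≤ n+1 → (0:Fin (n+1)) ∈ g k := by
    intro k h1 h2
    rcases Nat.lt_or_ge n k with h | h
    · rw [hgtop k h]; exact mem_univ _
    · rw [hgf k h]; exact hf0 k h1 h
  have hgT : ∀ k, r+1 ≤ k → k ≤ n → g k ∈ T := fun k h1 h2 => by
    rw [hgf k h2]; exact hfT k h1 h2
  have hgsub : ∀ k, r+1 ≤ k → k ≤ n → g k ⊆ g (k+1) := by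
    intro k h1 h2
    rcases Nat.lt_or_ge k n with h | h
    · rw [hgf k h2, hgf (k+1) (by omega)]
      rcases StarAux.chain2 hT (hfT k h1 h2) (hfT (k+1) (by omega) (by omega))
        (hf0 k h1 h2) with hh | hh
      · exact hh
      · have := card_le_card hh
        rw [hfcard k h1 h2, hfcard (k+1) (by omega) (by omega)] at this
        omega
    · have hk : k = n := by omega
      subst hk
      rw [hgtop (k+1) (by omega)]
      exact subset_univ _
  have hgmono : ∀ k, r+1 ≤ k → ∀ l, k ≤ l → l ≤ n+1 → g k ⊆ g l := by
    intro k h1 l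
    induction l with
    | zero => intro h2 _; exact absurd (h1.trans h2) (by omega)
    | succ m ih =>
      intro h2 h3
      rcases Nat.lt_or_ge m k with h | h
      · have hk : k = m + 1 := by omega
        rw [hk]
      · exact (ih h (by omega)).trans (hgsub m (by omega) (by omega))
  have hediff : ∀ k, r+1 ≤ k → k ≤ n → ∃ x, g (k+1) \ g k = {x} := by
    intro k h1 h2
    have : (g (k+1) \ g k).card = 1 := by
      rw [card_sdiff_of_subset (hgsub k h1 h2), hgcard (k+1) (by omega) (by omega),
        hgcard k h1 (by omega)]
      omega
    exact card_eq_one.mp this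
  choose! e he using hediff
  have heMem : ∀ k, r+1 ≤ k → k ≤ n → e k ∈ g (k+1) ∧ e k ∉ g k := by
    intro k h1 h2
    have h3 : e k ∈ g (k+1) \ g k := by
      rw [he k h1 h2]; exact mem_singleton_self _
    exact ⟨(mem_sdiff.mp h3).1, (mem_sdiff.mp h3).2⟩
  have hene0 : ∀ k, r+1 ≤ k → k ≤ n → e k ≠ 0 := by
    intro k h1 h2 h
    exact (heMem k h1 h2).2 (h ▸ hg0 k h1 (by omega))
  have hgunion : ∀ k, r+1 ≤ k → k ≤ n → g (k+1) = insert (e k) (g k) := by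
    intro k h1 h2
    have h3 : g k ∪ (g (k+1) \ g k) = g (k+1) := union_sdiff_of_subset (hgsub k h1 h2)
    rw [he k h1 h2] at h3
    rw [← h3, StarAux.union_single]
  have hgr1 : g (r+1) = t0 :=
    huniq _ (hgT (r+1) le_rfl hrn) _ ht0T (hg0 (r+1) le_rfl (by omega))
      (mem_insert_self _ _) (by rw [hgcard (r+1) le_rfl (by omega), ht0card])
  set E : ℕ → Fin (n+1) := fun j => e (r+1+j) with hEdef
  have hE : ∀ j, E j = e (r+1+j) := fun j => by rw [hEdef]
  set u : List (Fin (n+1)) := S.sort (· ≤ ·) ++ (List.range (n-r)).map E with hudef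
  have hlen_sort : (S.sort (· ≤ ·)).length = r := by rw [Finset.length_sort]
  have htake : u.take r = S.sort (· ≤ ·) := by
    rw [hudef, List.take_left' hlen_sort]
  have hdrop : u.drop r = (List.range (n-r)).map E := by
    rw [hudef, List.drop_left' hlen_sort]
  have hCF : ∀ j, j ≤ n - r →
      g (r+1+j) = insert (0:Fin (n+1)) (S ∪ ((List.range j).map E).toFinset) := by
    intro j
    induction j with
    | zero =>
      intro _
      simpa using hgr1
    | succ m ih =>
      intro hm
      have hih := ih (by omega)
      have harith : r+1+(m+1) = (r+1+m)+1 := rfl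
      rw [harith, hgunion (r+1+m) (by omega) (by omega), hih]
      rw [List.range_succ, List.map_append, List.toFinset_append]
      have hm1 : (List.map E [m]).toFinset = ({e (r+1+m)} : Finset (Fin (n+1))) := by
        rw [List.map_cons, List.map_nil, List.toFinset_cons, List.toFinset_nil,
          LawfulSingleton.insert_empty_eq, hE m]
      rw [hm1, StarAux.union_single, union_insert, Finset.insert_comm]
  have htakeE : ∀ j, j ≤ n - r →
      ((List.range (n-r)).map E).take j = (List.range j).map E := by
    intro j hj
    rw [← List.map_take, List.take_range, Nat.min_eq_left hj]
  have hmemT : ∀ s, s ∈ T ↔ s ∈ tubOf n r u := by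
    intro s
    rw [StarAux.mem_tubOf, htake, hdrop, Finset.sort_toFinset]
    constructor
    · intro hs
      rcases (StarAux.isTube_iff.mp (hT.1 s hs)).2 with h0s | ⟨x, hx0, rfl⟩
      · right
        have hsc1 : r + 1 ≤ s.card := by
          have := card_le_card (ht0sub s hs h0s)
          rw [ht0card] at this
          exact this
        have hsc2 : s.card ≤ n := by
          have h1 : s.card < n + 1 := by
            have := card_lt_card ((subset_univ s).ssubset_of_ne (hT.1 s hs).2.1)
            rwa [card_univ, Fintype.card_fin] at this
          omega
        obtain ⟨k, hk⟩ : ∃ k, s.card = k := ⟨s.card, rfl⟩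
        refine ⟨k - (r+1), by omega, ?_⟩
        have hs_eq : s = g (r + 1 + (k - (r+1))) := by
          have harith : r + 1 + (k - (r+1)) = k := by omega
          rw [harith, hgf _ (by omega)]
          exact huniq s hs _ (hfT k (by omega) (by omega)) h0s (hf0 k (by omega) (by omega))
            (by rw [hfcard k (by omega) (by omega), hk])
        rw [hs_eq, hCF _ (by omega), htakeE _ (by omega)]
      · left
        exact ⟨x, by rw [Finset.mem_sort]; exact (hSmem x).mpr ⟨hs, hx0⟩, rfl⟩
    · rintro (⟨x, hx, rfl⟩ | ⟨j, hj, rfl⟩)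
      · rw [Finset.mem_sort] at hx
        exact ((hSmem x).mp hx).1
      · rw [htakeE j (le_of_lt hj), ← hCF j (le_of_lt hj)]
        exact hgT (r+1+j) (by omega) (by omega)
  have heq : T = tubOf n r u := Finset.ext hmemT
  have hulen : u.length = n := by
    rw [hudef, List.length_append, hlen_sort, List.length_map, List.length_range]
    omega
  have hSsubg : ∀ k, r+1 ≤ k → k ≤ n+1 → S ⊆ g k := by
    intro k h1 h2
    have h3 : S ⊆ t0 := subset_insert _ _
    have h4 : t0 ⊆ g k := by
      rw [← hgr1]
      exact hgmono (r+1) le_rfl k h1 h2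
    exact h3.trans h4
  have hunodup : u.Nodup := by
    rw [hudef, List.nodup_append]
    refine ⟨Finset.sort_nodup _ _, ?_, ?_⟩
    · refine List.Nodup.map_on ?_ List.nodup_range
      intro i hi j hj hij
      rw [List.mem_range] at hi hj
      by_contra hnij
      rcases Nat.lt_or_ge i j with h | h
      · apply (heMem (r+1+j) (by omega) (by omega)).2
        rw [← hE j, ← hij, hE i]
        exact hgmono (r+1+i+1) (by omega) (r+1+j) (by omega) (by omega)
          (heMem (r+1+i) (by omega) (by omega)).1
      · have h' : j < i := by omega
        apply (heMem (r+1+i) (by omega) (by omega)).2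
        rw [← hE i, hij, hE j]
        exact hgmono (r+1+j+1) (by omega) (r+1+i) (by omega) (by omega)
          (heMem (r+1+j) (by omega) (by omega)).1
    · intro a ha b hb hab
      subst hab
      rw [Finset.mem_sort] at ha
      obtain ⟨i, hi, rfl⟩ := List.mem_map.mp hb
      rw [List.mem_range] at hi
      apply (heMem (r+1+i) (by omega) (by omega)).2
      rw [← hE i]
      exact hSsubg (r+1+i) (by omega) (by omega) ha
  have hune0 : ∀ x ∈ u, x ≠ 0 := by
    intro x hx
    rw [hudef, List.mem_append] at hx
    rcases hx with hx | hx
    · rw [Finset.mem_sort] at hx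
      exact ((hSmem x).mp hx).2
    · obtain ⟨i, hi, rfl⟩ := List.mem_map.mp hx
      rw [List.mem_range] at hi
      rw [hE i]
      exact hene0 (r+1+i) (by omega) (by omega)
  have husort : List.Pairwise (· < ·) (u.take r) := by
    rw [htake]
    exact (Finset.sortedLT_sort _).pairwise
  have hkey : ∀ r' (u' : List (Fin (n+1))), r' ≤ n → u'.length = n → u'.Nodup →
      (∀ x ∈ u', x ≠ 0) → List.Pairwise (· < ·) (u'.take r') → T = tubOf n r' u' →
      r' = r ∧ u' = u := by
    intro r' u' h1 h2 h3 h4 h5 h6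
    have hS' : (u'.take r').toFinset = S := by
      ext x
      rw [List.mem_toFinset, hSmem]
      constructor
      · intro hx
        refine ⟨?_, h4 x (List.mem_of_mem_take hx)⟩
        rw [h6, StarAux.mem_tubOf]
        exact Or.inl ⟨x, hx, rfl⟩
      · rintro ⟨hxT, hx0⟩
        rw [h6, StarAux.mem_tubOf] at hxT
        rcases hxT with ⟨y, hy, hxy⟩ | ⟨j, hj, hxy⟩
        · exact (Finset.singleton_inj.mp hxy) ▸ hy
        · exfalso
          have h0x : (0 : Fin (n+1)) ∈ ({x} : Finset (Fin (n+1))) := by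
            rw [hxy]; exact mem_insert_self _ _
          exact hx0 (mem_singleton.mp h0x).symm
    have hnodtake : (u'.take r').Nodup := List.Nodup.sublist (List.take_sublist _ _) h3
    have hr'r : r' = r := by
      have hc1 : (u'.take r').toFinset.card = (u'.take r').length :=
        List.toFinset_card_of_nodup hnodtake
      rw [hS', List.length_take, h2, Nat.min_eq_left h1] at hc1
      omega
    subst hr'r
    have hdnod : (u'.drop r).Nodup := List.Nodup.sublist (List.drop_sublist _ _) h3
    have hdlen : (u'.drop r).length = n - r := by rw [List.length_drop, h2]
    have hdisj : ∀ x ∈ S, x ∉ (u'.drop r) := by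
      intro x hxS hxd
      have h7 : x ∈ u'.take r := by rw [← List.mem_toFinset, hS']; exact hxS
      have h8 := h3
      rw [← List.take_append_drop r u', List.nodup_append] at h8
      exact h8.2.2 x h7 x hxd rfl
    have hCF' : ∀ j, j ≤ n - r →
        insert (0:Fin (n+1)) (S ∪ ((u'.drop r).take j).toFinset) = g (r+1+j) := by
      intro j hj
      rcases Nat.lt_or_ge j (n-r) with hjlt | hjge
      · have hmem : insert (0:Fin (n+1)) (S ∪ ((u'.drop r).take j).toFinset) ∈ T := by
          rw [h6, StarAux.mem_tubOf]
          right
          refine ⟨j, hjlt, ?_⟩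
          rw [hS']
        have hnodtj : ((u'.drop r).take j).Nodup :=
          List.Nodup.sublist (List.take_sublist _ _) hdnod
        have hcardtj : ((u'.drop r).take j).toFinset.card = j := by
          rw [List.toFinset_card_of_nodup hnodtj, List.length_take, hdlen, Nat.min_eq_left hj]
        have hdisj2 : Disjoint S ((u'.drop r).take j).toFinset := by
          rw [Finset.disjoint_left]
          intro x hxS hxt
          exact hdisj x hxS (List.mem_of_mem_take (List.mem_toFinset.mp hxt))
        have h0no : (0:Fin (n+1)) ∉ S ∪ ((u'.drop r).take j).toFinset := by
          rw [mem_union]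
          rintro (h | h)
          · exact h0S h
          · exact h4 0 ((List.drop_sublist r u').subset
              (List.mem_of_mem_take (List.mem_toFinset.mp h))) rfl
        have hcard : (insert (0:Fin (n+1)) (S ∪ ((u'.drop r).take j).toFinset)).card
            = r+1+j := by
          rw [card_insert_of_notMem h0no, card_union_of_disjoint hdisj2, hcardtj]
          omega
        exact huniq _ hmem _ (hgT (r+1+j) (by omega) (by omega)) (mem_insert_self _ _)
          (hg0 _ (by omega) (by omega))
          (by rw [hcard, hgcard _ (by omega) (by omega)])
      · have hj' : j = n - r := by omega
        subst hj'
        rw [hgtop _ (by omega)]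
        rw [List.take_of_length_le hdlen.le]
        have hun : S ∪ (u'.drop r).toFinset = u'.toFinset := by
          rw [← hS', ← List.toFinset_append, List.take_append_drop]
        rw [hun]
        have hufin : u'.toFinset = univ.filter (· ≠ (0:Fin (n+1))) := by
          apply eq_of_subset_of_card_le
          · intro x hx
            rw [mem_filter]
            exact ⟨mem_univ _, h4 x (List.mem_toFinset.mp hx)⟩
          · rw [filter_ne', card_erase_of_mem (mem_univ _), card_univ, Fintype.card_fin,
              List.toFinset_card_of_nodup h3, h2]
            omega
        rw [hufin]
        apply eq_univ_iff_forall.mpr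
        intro z
        by_cases hz : z = 0
        · rw [hz]; exact mem_insert_self _ _
        · exact mem_insert_of_mem (mem_filter.mpr ⟨mem_univ _, hz⟩)
    have hget : ∀ j (hj : j < n - r),
        (u'.drop r)[j]'(by rw [hdlen]; exact hj) = e (r+1+j) := by
      intro j hj
      have hjlen : j < (u'.drop r).length := by rw [hdlen]; exact hj
      have htakesucc : (u'.drop r).take (j+1) =
          (u'.drop r).take j ++ [(u'.drop r)[j]'hjlen] := by
        rw [List.take_succ, List.getElem?_eq_getElem hjlen]
        rfl
      have h7 := hCF' (j+1) (by omega)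
      have h8 := hCF' j (by omega)
      rw [htakesucc, List.toFinset_append] at h7
      have he1 : e (r+1+j) ∈ g (r+1+(j+1)) := (heMem (r+1+j) (by omega) (by omega)).1
      have he2 : e (r+1+j) ∉ g (r+1+j) := (heMem (r+1+j) (by omega) (by omega)).2
      rw [← h7] at he1
      rw [← h8] at he2
      simp only [mem_insert, mem_union, List.mem_toFinset, List.toFinset_cons,
        List.toFinset_nil, LawfulSingleton.insert_empty_eq, mem_singleton, List.mem_singleton] at he1 he2
      push_neg at he2
      rcases he1 with h | h | h | h
      · exact absurd h he2.1
      · exact absurd h he2.2.1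
      · exact absurd h he2.2.2
      · exact h.symm
    have hdrop' : u'.drop r = (List.range (n-r)).map E := by
      apply List.ext_getElem
      · rw [hdlen, List.length_map, List.length_range]
      · intro i hi1 hi2
        rw [List.getElem_map, List.getElem_range, hE]
        exact hget i (by rwa [hdlen] at hi1)
    have htake'' : u'.take r = S.sort (· ≤ ·) :=
      StarAux.sorted_lt_eq h5 ((Finset.sortedLT_sort _).pairwise) hnodtake (Finset.sort_nodup _ _)
        (by rw [hS', Finset.sort_toFinset])
    refine ⟨rfl, ?_⟩
    rw [← List.take_append_drop r u', htake'', hdrop']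
  refine ⟨(r, u), ⟨by omega, hulen, hunodup, hune0, husort, heq⟩, ?_⟩
  rintro ⟨r', u'⟩ ⟨h1, h2, h3, h4, h5, h6⟩
  obtain ⟨hr', hu'⟩ := hkey r' u' h1 h2 h3 h4 h5 h6
  rw [Prod.mk.injEq]
  exact ⟨hr', hu'⟩
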